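/- arXiv:2604.06894 — 3 statements merged into one kernel-verified Lean document; each statement's English description precedes it below -/
import Mathlib

section
/- Let G̃ and G be CDFs with sup_x |G̃(x) − G(x)| ≤ ε, and suppose G satisfies G(x+u) − G(x−u) ≤ 2Lu for all x and u ≥ 0. If F̃ is a nondecreasing function satisfying G̃(x − δ) ≤ F̃(x) ≤ G̃(x + δ) for all x, then sup_x |F̃(x) − G̃(x)| ≤ 2Lδ + 2ε. -/
/-- If `sup_x |G̃ x - G x| ≤ ε`, `G` satisfies the Lipschitz-type bound
`G (x+u) - G (x-u) ≤ 2Lu`, and the nondecreasing `F̃` satisfies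
`G̃ (x-δ) ≤ F̃ x ≤ G̃ (x+δ)`, then `sup_x |F̃ x - G̃ x| ≤ 2Lδ + 2ε`. -/
theorem stmt_4 (Gtil G Ftil : ℝ → ℝ) (ε L δ : ℝ)
    (hε : 0 ≤ ε) (hL : 0 ≤ L) (hδ : 0 ≤ δ)
    (hGtilmono : Monotone Gtil) (hGmono : Monotone G) (hFtilmono : Monotone Ftil)
    (hGtilrange : ∀ x, Gtil x ∈ Set.Icc (0:ℝ) 1)
    (hGrange : ∀ x, G x ∈ Set.Icc (0:ℝ) 1)
    (hFtilrange : ∀ x, Ftil x ∈ Set.Icc (0:ℝ) 1)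
    (happrox : ∀ x, |Gtil x - G x| ≤ ε)
    (hLip : ∀ x u : ℝ, 0 ≤ u → G (x + u) - G (x - u) ≤ 2 * L * u)
    (hsand : ∀ x, Gtil (x - δ) ≤ Ftil x ∧ Ftil x ≤ Gtil (x + δ)) :
    ∀ x, |Ftil x - Gtil x| ≤ 2 * L * δ + 2 * ε := by
  intro x
  have h1 := (hsand x).1
  have h2 := (hsand x).2
  have a1 := abs_le.1 (happrox (x + δ))
  have a2 := abs_le.1 (happrox (x - δ))
  have a3 := abs_le.1 (happrox x)
  have hlip := hLip x δ hδ
  have hg1 : G (x - δ) ≤ G x := hGmono (by linarith)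
  have hg2 : G x ≤ G (x + δ) := hGmono (by linarith)
  rw [abs_le]
  constructor <;> linarith
end

section
/- Suppose (i) the empirical oracle-score CDF G̃ satisfies sup_x |G̃(x) − G(x)| ≤ ε; (ii) the fitted scores s_{i,t} and oracle scores r_{i,t} satisfy |s_{i,t} − r_{i,t}| ≤ δ for all calibration and test points; and (iii) G satisfies G(x+u) − G(x−u) ≤ 2Lu for all x, u ≥ 0. Then the empirical CDF F̃ of the fitted calibration scores and the CDF F of the fitted test score satisfy sup_x |F̃(x) − F(x)| ≤ 3ε + 4Lδ. -/
open MeasureTheory Finset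

/-- Under (i) uniform closeness of the empirical oracle-score CDF `G̃` to the
oracle CDF `G`, (ii) pointwise `δ`-closeness of fitted and oracle scores on calibration and
test points, and (iii) a Lipschitz-type condition on `G`, the empirical CDF `F̃` of the
fitted calibration scores and the CDF `F` of the fitted test score satisfy
`sup_x |F̃ x - F x| ≤ 3ε + 4Lδ`. -/
theorem stmt_5 {Ω : Type*} [MeasurableSpace Ω] (μ : Measure Ω) [IsProbabilityMeasure μ]
    (m : ℕ) (hm : 0 < m) (s r : Fin m → ℝ) (sStar rStar : Ω → ℝ)
    (ε L δ : ℝ) (hε : 0 ≤ ε) (hL : 0 ≤ L) (hδ : 0 ≤ δ)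
    (Ftil Gtil F G : ℝ → ℝ)
    (hFtil : ∀ x, Ftil x = ((Finset.univ.filter (fun j => s j ≤ x)).card : ℝ) / m)
    (hGtil : ∀ x, Gtil x = ((Finset.univ.filter (fun j => r j ≤ x)).card : ℝ) / m)
    (hF : ∀ x, F x = (μ {ω | sStar ω ≤ x}).toReal)
    (hG : ∀ x, G x = (μ {ω | rStar ω ≤ x}).toReal)
    (hmeas_s : Measurable sStar) (hmeas_r : Measurable rStar)
    (hclose_cal : ∀ j, |s j - r j| ≤ δ)
    (hclose_test : ∀ᵐ ω ∂μ, |sStar ω - rStar ω| ≤ δ)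
    (happrox : ∀ x, |Gtil x - G x| ≤ ε)
    (hLip : ∀ x u : ℝ, 0 ≤ u → G (x + u) - G (x - u) ≤ 2 * L * u) :
    ∀ x, |Ftil x - F x| ≤ 3 * ε + 4 * L * δ := by
  intro x
  -- comparison of empirical CDFs
  have hcard1 : Ftil x ≤ Gtil (x + δ) := by
    rw [hFtil, hGtil]
    have hsub : (Finset.univ.filter (fun j => s j ≤ x)) ⊆
        (Finset.univ.filter (fun j => r j ≤ x + δ)) := by
      intro j hj
      simp only [Finset.mem_filter, Finset.mem_univ, true_and] at hj ⊢
      have := abs_le.mp (hclose_cal j)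
      linarith [this.1, this.2]
    have := Finset.card_le_card hsub
    gcongr

  have hcard2 : Gtil (x - δ) ≤ Ftil x := by
    rw [hFtil, hGtil]
    have hsub : (Finset.univ.filter (fun j => r j ≤ x - δ)) ⊆
        (Finset.univ.filter (fun j => s j ≤ x)) := by
      intro j hj
      simp only [Finset.mem_filter, Finset.mem_univ, true_and] at hj ⊢
      have := abs_le.mp (hclose_cal j)
      linarith [this.1, this.2]
    have := Finset.card_le_card hsub
    gcongr

  -- comparison of true CDFs
  have hmu1 : F x ≤ G (x + δ) := by
    rw [hF, hG]
    have hae : {ω | sStar ω ≤ x} ≤ᵐ[μ] {ω | rStar ω ≤ x + δ} := by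
      filter_upwards [hclose_test] with ω hω hs
      have := abs_le.mp hω
      have hs' : sStar ω ≤ x := hs
      show rStar ω ≤ x + δ
      linarith [this.1, this.2]
    exact ENNReal.toReal_mono (measure_ne_top μ _) (measure_mono_ae hae)
  have hmu2 : G (x - δ) ≤ F x := by
    rw [hF, hG]
    have hae : {ω | rStar ω ≤ x - δ} ≤ᵐ[μ] {ω | sStar ω ≤ x} := by
      filter_upwards [hclose_test] with ω hω hs
      have := abs_le.mp hω
      have hs' : rStar ω ≤ x - δ := hs
      show sStar ω ≤ x
      linarith [this.1, this.2]
    exact ENNReal.toReal_mono (measure_ne_top μ _) (measure_mono_ae hae)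
  have hap1 := abs_le.mp (happrox (x + δ))
  have hap2 := abs_le.mp (happrox (x - δ))
  have hlip := hLip x δ hδ
  rw [abs_le]
  constructor <;> nlinarith [hap1.1, hap1.2, hap2.1, hap2.2]
end

section
/- Combining the CDF approximation bound with the empirical quantile property: under assumptions (i)–(iii) of the previous statement, the conformal prediction interval built from the left empirical (1−α)-quantile q of F̃ over m calibration scores satisfies |P(y* ∈ C(1−α)) − (1 − α)| ≤ 3ε + 4Lδ + 1/m. -/
open MeasureTheory Finset

/-- Under assumptions (i)-(iii) of Statement 5, the conformal prediction
interval built from the left empirical `(1-α)`-quantile `q` of `F̃` over `m` calibration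
scores satisfies `|P(y* ∈ C(1-α)) - (1-α)| ≤ 3ε + 4Lδ + 1/m`, where the coverage event
equals `{s* ≤ q}`. -/
theorem stmt_6 {Ω : Type*} [MeasurableSpace Ω] (μ : Measure Ω) [IsProbabilityMeasure μ]
    (m : ℕ) (hm : 0 < m) (s r : Fin m → ℝ) (sStar rStar : Ω → ℝ)
    (α ε L δ : ℝ) (hα : α ∈ Set.Ioo (0:ℝ) 1) (hε : 0 ≤ ε) (hL : 0 ≤ L) (hδ : 0 ≤ δ)
    (Ftil Gtil F G : ℝ → ℝ)
    (hFtil : ∀ x, Ftil x = ((Finset.univ.filter (fun j => s j ≤ x)).card : ℝ) / m)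
    (hGtil : ∀ x, Gtil x = ((Finset.univ.filter (fun j => r j ≤ x)).card : ℝ) / m)
    (hF : ∀ x, F x = (μ {ω | sStar ω ≤ x}).toReal)
    (hG : ∀ x, G x = (μ {ω | rStar ω ≤ x}).toReal)
    (hmeas_s : Measurable sStar) (hmeas_r : Measurable rStar)
    (hclose_cal : ∀ j, |s j - r j| ≤ δ)
    (hclose_test : ∀ᵐ ω ∂μ, |sStar ω - rStar ω| ≤ δ)
    (happrox : ∀ x, |Gtil x - G x| ≤ ε)
    (hLip : ∀ x u : ℝ, 0 ≤ u → G (x + u) - G (x - u) ≤ 2 * L * u)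
    (q : ℝ) (hq : q = sInf {x : ℝ | 1 - α ≤ Ftil x}) :
    |(μ {ω | sStar ω ≤ q}).toReal - (1 - α)| ≤ 3 * ε + 4 * L * δ + 1 / m := by
  obtain ⟨hα0, hα1⟩ := hα
  haveI : Nonempty (Fin m) := ⟨⟨0, hm⟩⟩
  have hm' : (0:ℝ) < m := by exact_mod_cast hm
  -- (a) empirical sandwich
  have hFG1 : ∀ x, Ftil x ≤ Gtil (x + δ) := by
    intro x
    rw [hFtil, hGtil]
    have hc : ((Finset.univ.filter (fun j => s j ≤ x)).card : ℝ) ≤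
        ((Finset.univ.filter (fun j => r j ≤ x + δ)).card : ℝ) := by
      exact_mod_cast Finset.card_le_card (by
        intro j hj
        have hjx : s j ≤ x := (Finset.mem_filter.1 hj).2
        have := abs_le.1 (hclose_cal j)
        exact Finset.mem_filter.2 ⟨Finset.mem_univ j, by linarith [this.1]⟩)
    exact div_le_div_of_nonneg_right hc hm'.le |>.trans_eq rfl
  have hFG2 : ∀ x, Gtil (x - δ) ≤ Ftil x := by
    intro x
    rw [hFtil, hGtil]
    have hc : ((Finset.univ.filter (fun j => r j ≤ x - δ)).card : ℝ) ≤
        ((Finset.univ.filter (fun j => s j ≤ x)).card : ℝ) := by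
      exact_mod_cast Finset.card_le_card (by
        intro j hj
        have hjx : r j ≤ x - δ := (Finset.mem_filter.1 hj).2
        have := abs_le.1 (hclose_cal j)
        exact Finset.mem_filter.2 ⟨Finset.mem_univ j, by linarith [this.2]⟩)
    exact div_le_div_of_nonneg_right hc hm'.le |>.trans_eq rfl
  -- (b) true sandwich
  have hFG3 : ∀ x, F x ≤ G (x + δ) := by
    intro x
    rw [hF, hG]
    have hmono : μ {ω | sStar ω ≤ x} ≤ μ {ω | rStar ω ≤ x + δ} := by
      apply measure_mono_ae
      filter_upwards [hclose_test] with ω hω hx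
      have h2 := (abs_le.1 hω).1
      have hx' : sStar ω ≤ x := hx
      show rStar ω ≤ x + δ
      linarith
    exact ENNReal.toReal_mono (measure_ne_top μ _) hmono
  have hFG4 : ∀ x, G (x - δ) ≤ F x := by
    intro x
    rw [hF, hG]
    have hmono : μ {ω | rStar ω ≤ x - δ} ≤ μ {ω | sStar ω ≤ x} := by
      apply measure_mono_ae
      filter_upwards [hclose_test] with ω hω hx
      have h1 := (abs_le.1 hω).2
      have hx' : rStar ω ≤ x - δ := hx
      show sStar ω ≤ x
      linarith
    exact ENNReal.toReal_mono (measure_ne_top μ _) hmono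
  -- (c) uniform bound |Ftil - F| ≤ ε + 2Lδ
  have hGlip : ∀ x, G (x + δ) - G (x - δ) ≤ 2 * L * δ := fun x => hLip x δ hδ
  have hclose : ∀ x, |Ftil x - F x| ≤ ε + 2 * L * δ := by
    intro x
    have h1 := abs_le.1 (happrox (x + δ))
    have h2 := abs_le.1 (happrox (x - δ))
    rw [abs_le]
    constructor
    · -- F x - Ftil x ≤ ε + 2Lδ : F x ≤ G(x+δ) ≤ G(x-δ) + 2Lδ ≤ Gtil(x-δ) + ε + 2Lδ ≤ Ftil x + ...
      have := hFG3 x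
      have := hFG2 x
      have := hGlip x
      linarith [h2.1]
    · have := hFG1 x
      have := hFG4 x
      have := hGlip x
      linarith [h1.1]
  -- quantile set
  set S : Set ℝ := {x : ℝ | 1 - α ≤ Ftil x} with hS
  have hFtil_all : ∀ x, (∀ j, s j ≤ x) → Ftil x = 1 := by
    intro x hx
    rw [hFtil]
    have : Finset.univ.filter (fun j => s j ≤ x) = Finset.univ := by
      apply Finset.filter_true_of_mem
      intro j _
      exact hx j
    rw [this, Finset.card_univ, Fintype.card_fin]
    field_simp
  have hSne : (Finset.univ.sup' Finset.univ_nonempty s) ∈ S := by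
    rw [hS, Set.mem_setOf_eq, hFtil_all _ (fun j => Finset.le_sup' s (Finset.mem_univ j))]
    linarith
  have hSbdd : BddBelow S := by
    refine ⟨Finset.univ.inf' Finset.univ_nonempty s, ?_⟩
    intro x hx
    rw [hS, Set.mem_setOf_eq, hFtil x] at hx
    have hpos : 0 < ((Finset.univ.filter (fun j => s j ≤ x)).card : ℝ) / m := by
      linarith
    have hcard : 0 < (Finset.univ.filter (fun j => s j ≤ x)).card := by
      by_contra h
      push_neg at h
      interval_cases h' : (Finset.univ.filter (fun j => s j ≤ x)).card
      · simp [h'] at hpos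
    obtain ⟨j, hj⟩ := Finset.card_pos.1 hcard
    simp only [Finset.mem_filter, Finset.mem_univ, true_and] at hj
    exact le_trans (Finset.inf'_le s (Finset.mem_univ j)) hj
  have hqle : ∀ x ∈ S, q ≤ x := fun x hx => hq ▸ csInf_le hSbdd hx
  -- Ftil q ≥ 1 - α
  have hFq : 1 - α ≤ Ftil q := by
    by_cases hall : ∀ j, s j ≤ q
    · rw [hFtil_all q hall]; linarith
    · push_neg at hall
      -- let x* = min of s j over j with q < s j
      set T := Finset.univ.filter (fun j => q < s j) with hT
      have hTne : T.Nonempty := by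
        obtain ⟨j, hj⟩ := hall
        exact ⟨j, Finset.mem_filter.2 ⟨Finset.mem_univ j, hj⟩⟩
      set xs := T.inf' hTne s with hxs
      have hq_lt_xs : q < xs := by
        rw [hxs]
        apply (Finset.lt_inf'_iff hTne).2
        intro j hj
        exact (Finset.mem_filter.1 hj).2
      -- there exists x ∈ S with x < xs
      have hex : ∃ x ∈ S, x < xs := by
        by_contra h
        push_neg at h
        have : xs ≤ sInf S := le_csInf ⟨_, hSne⟩ h
        rw [← hq] at this
        linarith
      obtain ⟨x, hxS, hxlt⟩ := hex
      have hqx : q ≤ x := hqle x hxS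
      have hfilter_eq : Finset.univ.filter (fun j => s j ≤ x) =
          Finset.univ.filter (fun j => s j ≤ q) := by
        apply Finset.filter_congr
        intro j _
        constructor
        · intro hjx
          by_contra hjq
          push_neg at hjq
          have : xs ≤ s j := Finset.inf'_le s (Finset.mem_filter.2 ⟨Finset.mem_univ j, hjq⟩)
          linarith
        · intro hjq; linarith
      have : Ftil x = Ftil q := by rw [hFtil, hFtil, hfilter_eq]
      rw [hS, Set.mem_setOf_eq] at hxS
      linarith
  -- for x < q, Ftil x < 1 - α
  have hFlt : ∀ x, x < q → Ftil x < 1 - α := by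
    intro x hx
    by_contra h
    push_neg at h
    have := hqle x h
    linarith
  -- lower bound on F q
  have hlow : 1 - α - (ε + 2 * L * δ) ≤ F q := by
    have := abs_le.1 (hclose q)
    linarith [this.1]
  -- upper bound on F q
  have hup : F q - (1 - α) ≤ ε + 4 * L * δ := by
    have key : ∀ t : ℝ, 0 < t → F q - (1 - α) ≤ ε + 4 * L * δ + L * t := by
      intro t ht
      have h1 : F q ≤ G (q + δ) := hFG3 q
      have h2 : G (q - t - δ) ≤ F (q - t) := hFG4 (q - t)
      have h3 : G (q + δ) - G (q - t - δ) ≤ 2 * L * (δ + t / 2) := by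
        have := hLip (q - t / 2) (δ + t / 2) (by linarith)
        have e1 : q - t / 2 + (δ + t / 2) = q + δ := by ring
        have e2 : q - t / 2 - (δ + t / 2) = q - t - δ := by ring
        rwa [e1, e2] at this
      have h4 : Ftil (q - t) < 1 - α := hFlt _ (by linarith)
      have h5 := abs_le.1 (hclose (q - t))
      nlinarith [h5.2]
    by_contra h
    push_neg at h
    set η := F q - (1 - α) - (ε + 4 * L * δ) with hη
    have hηpos : 0 < η := by linarith
    have := key (η / (L + 1)) (div_pos hηpos (by linarith))
    have hLη : L * (η / (L + 1)) < η := by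
      rw [mul_div_assoc']
      rw [div_lt_iff₀ (by linarith)]
      nlinarith
    linarith
  -- conclude
  rw [← hF q]
  have h1m : 0 < 1 / (m : ℝ) := by positivity
  rw [abs_le]
  constructor <;> nlinarith
end
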